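/- Let X = ⋃_{k∈K} X_k finite with J : X → ℝ², utopia points J^u_k, and let K₁^m = {k ∈ K : no l ≠ k has J^u_l ≤ J^u_k and J^u_l ≠ J^u_k} (classes with non-dominated utopia points). Let M = ⋃_{k∈K₁^m} X*_k be the master set and K∅ = {l : ∃ x ∈ M with J(x) ≤ J^u_l and J(x) ≠ J^u_l, x ∉ X_l}. Then the global Pareto set X* is contained in ⋃_{k ∈ K \ K∅} X*_k. -/
import Mathlib


/-- after Phase A pruning, the global Pareto set is contained in the
union of the subproblem Pareto sets of the unpruned classes `K \ K∅`. -/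
theorem global_pareto_subset_unpruned_union
    {α K : Type*} (X : Set α) (Xk : K → Set α) (J : α → ℝ × ℝ)
    (hfin : X.Finite)
    (hcover : X = ⋃ k, Xk k)
    (Xstar : Set α)
    (hXstar : Xstar = {x ∈ X | ¬ ∃ x' ∈ X, J x' ≤ J x ∧ J x' ≠ J x})
    (Xkstar : K → Set α)
    (hXkstar : ∀ k, Xkstar k =
      {x ∈ Xk k | ¬ ∃ x' ∈ Xk k, J x' ≤ J x ∧ J x' ≠ J x})
    (u : K → ℝ × ℝ)
    (hu : ∀ k, u k = (sInf ((fun x => (J x).1) '' Xk k),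
                      sInf ((fun x => (J x).2) '' Xk k)))
    (K1m : Set K)
    (hK1m : K1m = {k | ¬ ∃ l, l ≠ k ∧ u l ≤ u k ∧ u l ≠ u k})
    (M : Set α) (hM : M = ⋃ k ∈ K1m, Xkstar k)
    (Kempty : Set K)
    (hKempty : Kempty = {l | ∃ x ∈ M, J x ≤ u l ∧ J x ≠ u l ∧ x ∉ Xk l}) :
    Xstar ⊆ ⋃ k ∈ {k | k ∉ Kempty}, Xkstar k := by
  have hXkX : ∀ k, Xk k ⊆ X := fun k => hcover ▸ Set.subset_iUnion Xk k
  have hMX : M ⊆ X := by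
    rw [hM]
    refine Set.iUnion₂_subset fun k _ => ?_
    rw [hXkstar k]
    exact fun x hx => hXkX k hx.1
  intro x hx
  rw [hXstar] at hx
  obtain ⟨hxX, hnd⟩ := hx
  rw [hcover] at hxX
  obtain ⟨k, hxk⟩ := Set.mem_iUnion.mp hxX
  -- u k ≤ J x
  have hukx : u k ≤ J x := by
    have hfink : (Xk k).Finite := hfin.subset (hXkX k)
    have hne : x ∈ Xk k := hxk
    rw [hu k, Prod.le_def]
    constructor
    · exact csInf_le (hfink.image _).bddBelow ⟨x, hne, rfl⟩
    · exact csInf_le (hfink.image _).bddBelow ⟨x, hne, rfl⟩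
  -- k ∉ Kempty
  have hkne : k ∉ Kempty := by
    intro hk
    rw [hKempty] at hk
    obtain ⟨y, hyM, hyle, hyne, _⟩ := hk
    have hyX : y ∈ X := hMX hyM
    have hle : J y ≤ J x := le_trans hyle hukx
    have hne : J y ≠ J x := by
      intro h
      exact hyne (le_antisymm hyle (h ▸ hukx))
    exact hnd ⟨y, hyX, hle, hne⟩
  refine Set.mem_biUnion hkne ?_
  rw [hXkstar k]
  refine ⟨hxk, fun ⟨x', hx', hle, hne⟩ => hnd ⟨x', hXkX k hx', hle, hne⟩⟩
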